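/- arXiv:2105.13826 — 11 statements merged into one kernel-verified Lean document; each statement's English description precedes it below -/
import Mathlib

section
/- If p is a prime with p ≡ 3 (mod 4) and p > 3, then p + 1 and 4^p - 1 have no common prime divisor greater than 3. -/
theorem no_common_prime_divisor_prime_case (p : ℕ) (hp : p.Prime) (hp4 : p % 4 = 3)
    (hp3 : 3 < p) :
    ¬ ∃ π : ℕ, π.Prime ∧ 3 < π ∧ π ∣ p + 1 ∧ π ∣ 4 ^ p - 1 := by
  rintro ⟨π, hπ, hπ3, hπp, hπ4⟩
  haveI : Fact π.Prime := ⟨hπ⟩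
  have h1 : (1:ℕ) ≤ 4 ^ p := Nat.one_le_pow _ _ (by norm_num)
  have h4 : ((4 : ZMod π)) ^ p = 1 := by
    have h := (ZMod.natCast_eq_zero_iff _ _).mpr hπ4
    rw [Nat.cast_sub h1] at h
    push_cast at h
    linear_combination h
  have hne : (4 : ZMod π) ≠ 0 := by
    intro h
    have hd : π ∣ 4 := by
      have := (ZMod.natCast_eq_zero_iff 4 π).mp (by exact_mod_cast h)
      exact this
    have := Nat.le_of_dvd (by norm_num) hd
    interval_cases π
    · norm_num at hπ
  have hord : orderOf (4 : ZMod π) ∣ p := orderOf_dvd_of_pow_eq_one h4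
  rcases (Nat.Prime.eq_one_or_self_of_dvd hp _ hord) with h | h
  · have h41 : (4 : ZMod π) = 1 := orderOf_eq_one_iff.mp h
    have h30 : ((3 : ℕ) : ZMod π) = 0 := by push_cast; linear_combination h41
    have : π ∣ 3 := (ZMod.natCast_eq_zero_iff 3 π).mp h30
    have := Nat.le_of_dvd (by norm_num) this
    omega
  · have hd : orderOf (4 : ZMod π) ∣ π - 1 := ZMod.orderOf_dvd_card_sub_one hne
    rw [h] at hd
    have hle : p ≤ π - 1 := Nat.le_of_dvd (by omega) hd
    have hπle : π ≤ p + 1 := Nat.le_of_dvd (by omega) hπp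
    have hπeq : π = p + 1 := by omega
    have hpodd : p % 2 = 1 := by omega
    have : (2 : ℕ) ∣ π := by omega
    have := (Nat.Prime.even_iff hπ).mp (even_iff_two_dvd.mpr this)
    omega
end

section
/- If p and q = p + 2 are both prime and n = p*q, then n + 1 and 4^n - 1 have no common prime divisor greater than 3. -/
theorem no_common_prime_divisor_twin_prime_case (p n : ℕ) (hp : p.Prime)
    (hq : (p + 2).Prime) (hn : n = p * (p + 2)) :
    ¬ ∃ π : ℕ, π.Prime ∧ 3 < π ∧ π ∣ n + 1 ∧ π ∣ 4 ^ n - 1 := by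
  rintro ⟨π, hπ, h3, hdn1, hd4⟩
  subst hn
  -- p ≠ 2
  have hp2 : p ≠ 2 := by
    rintro rfl
    norm_num at hq
  have hpodd : Odd p := hp.odd_of_ne_two hp2
  have hp_pos : 0 < p := hp.pos
  -- π ∣ p + 1
  have hsq : p * (p + 2) + 1 = (p + 1) ^ 2 := by ring
  have hπp1 : π ∣ p + 1 := hπ.dvd_of_dvd_pow (hsq ▸ hdn1)
  have hπle : π ≤ p + 1 := Nat.le_of_dvd (by omega) hπp1
  haveI : Fact π.Prime := ⟨hπ⟩
  -- (4 : ZMod π) ^ n = 1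
  obtain ⟨k, hk⟩ := hd4
  have hk' : 4 ^ (p * (p + 2)) = π * k + 1 := by
    have h1 : 1 ≤ 4 ^ (p * (p + 2)) := Nat.one_le_pow _ _ (by norm_num)
    omega
  have h4ne : (4 : ZMod π) ≠ 0 := by
    intro h
    have h4 : ((4 : ℕ) : ZMod π) = 0 := by exact_mod_cast h
    have := (ZMod.natCast_eq_zero_iff 4 π).mp h4
    have := Nat.le_of_dvd (by norm_num) this
    have hπ4 : π = 4 := by omega
    rw [hπ4] at hπ
    norm_num at hπ
  have hpow : (4 : ZMod π) ^ (p * (p + 2)) = 1 := by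
    have := congrArg (fun m : ℕ => (m : ZMod π)) hk'
    push_cast at this
    simpa [ZMod.natCast_self] using this
  set d := orderOf (4 : ZMod π) with hd
  have hdn : d ∣ p * (p + 2) := orderOf_dvd_of_pow_eq_one hpow
  have hdc : d ∣ π - 1 :=
    orderOf_dvd_of_pow_eq_one (ZMod.pow_card_sub_one_eq_one h4ne)
  have hdpos : 0 < d := by
    rcases Nat.eq_zero_or_pos d with h | h
    · rw [h] at hdc
      have := Nat.eq_zero_of_zero_dvd hdc
      omega
    · exact h
  have hdle : d ≤ p := by
    have : π - 1 > 0 := by omega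
    have := Nat.le_of_dvd this hdc
    omega
  -- d divides p
  have hdp : d ∣ p := by
    have hcop : Nat.Coprime d (p + 2) :=
      Nat.Coprime.symm ((Nat.Prime.coprime_iff_not_dvd hq).mpr
        (fun h => by have := Nat.le_of_dvd hdpos h; omega))
    exact hcop.dvd_of_dvd_mul_right hdn
  rcases (Nat.Prime.eq_one_or_self_of_dvd hp d hdp) with h1 | hdp'
  · -- d = 1 : 4 = 1 in ZMod π, so π ∣ 3
    have : (4 : ZMod π) = 1 := orderOf_eq_one_iff.mp h1
    have h30 : ((3 : ℕ) : ZMod π) = 0 := by push_cast; linear_combination this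
    rw [ZMod.natCast_eq_zero_iff] at h30
    have := Nat.le_of_dvd (by norm_num) h30
    omega
  · -- d = p : p ∣ π - 1 so π ≥ p + 1, hence π = p + 1 even
    have hple : p ≤ π - 1 := Nat.le_of_dvd (by omega) (hdp' ▸ hdc)
    have hπeq : π = p + 1 := by omega
    have h2π : 2 ∣ π := by
      obtain ⟨m, hm⟩ := hpodd
      omega
    rcases (hπ.eq_one_or_self_of_dvd 2 h2π) with h | h <;> omega
end

section
/- If p and q = p + 2 are odd primes, then gcd(4^p + 1, 4^q + 1) = 5. -/
theorem gcd_twin_prime_pow_add_one (p : ℕ) (hp : p.Prime) (hq : (p + 2).Prime)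
    (hodd : Odd p) : Nat.gcd (4 ^ p + 1) (4 ^ (p + 2) + 1) = 5 := by
  set a := 4 ^ p + 1 with ha
  set b := 4 ^ (p + 2) + 1 with hb
  have hpow : 4 ^ (p + 2) = 16 * 4 ^ p := by ring
  have hkey : 16 * a - b = 15 := by omega
  have h15 : Nat.gcd a b ∣ 15 := by
    have := Nat.dvd_sub (Dvd.dvd.mul_left (Nat.gcd_dvd_left a b) 16) (Nat.gcd_dvd_right a b)
    rwa [hkey] at this
  have h5a : (5 : ℕ) ∣ a := by
    have : ((a : ℕ) : ZMod 5) = 0 := by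
      rw [ha]; push_cast
      rw [show ((4 : ZMod 5)) = -1 from by decide, hodd.neg_one_pow]; ring
    exact (ZMod.natCast_eq_zero_iff _ _).mp this
  have h5b : (5 : ℕ) ∣ b := by
    have hodd' : Odd (p + 2) := by
      obtain ⟨k, hk⟩ := hodd; exact ⟨k + 1, by omega⟩
    have : ((b : ℕ) : ZMod 5) = 0 := by
      rw [hb]; push_cast
      rw [show ((4 : ZMod 5)) = -1 from by decide, hodd'.neg_one_pow]; ring
    exact (ZMod.natCast_eq_zero_iff _ _).mp this
  have h5g : 5 ∣ Nat.gcd a b := Nat.dvd_gcd h5a h5b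
  have h3 : ¬ (3 : ℕ) ∣ Nat.gcd a b := by
    intro h
    have h3a : (3 : ℕ) ∣ a := h.trans (Nat.gcd_dvd_left a b)
    have : ((a : ℕ) : ZMod 3) = 0 := (ZMod.natCast_eq_zero_iff _ _).mpr h3a
    rw [ha] at this; push_cast at this
    rw [show ((4 : ZMod 3)) = 1 from by decide, one_pow] at this
    exact (by decide : ((1 : ZMod 3) + 1 ≠ 0)) this
  have hle : Nat.gcd a b ≤ 15 := Nat.le_of_dvd (by norm_num) h15
  have hpos : 0 < Nat.gcd a b := Nat.gcd_pos_of_pos_left _ (by positivity)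
  have hge : 5 ≤ Nat.gcd a b := Nat.le_of_dvd hpos h5g
  interval_cases h : Nat.gcd a b <;> omega
end

section
/- Let n ≡ 3 (mod 4), and let s : ZMod n → {±1} have ideal autocorrelation. Then for any prime π ≥ 7 dividing 4^n - 1, (∑_{λ=0}^{n-1} s(λ) 4^(2λ)) * (∑_{μ=0}^{n-1} s(μ) 4^(-2μ)) ≡ n + 1 (mod π), where 4^(-1) denotes the inverse of 4 modulo π. -/
private lemma pow_mod_eq' {K : Type*} [Monoid K] {a : K} {n : ℕ} (h : a ^ n = 1) (j : ℕ) :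
    a ^ j = a ^ (j % n) := by
  conv_lhs => rw [← Nat.div_add_mod j n]
  rw [pow_add, pow_mul, h, one_pow, one_mul]

private lemma sum_range_eq_sum_zmod {n : ℕ} [NeZero n] {K : Type*} [AddCommMonoid K]
    (f : ZMod n → K) : ∑ l ∈ Finset.range n, f (l : ZMod n) = ∑ x : ZMod n, f x := by
  exact Finset.sum_nbij' (fun l : ℕ => (l : ZMod n)) (fun x => x.val)
    (fun a _ => Finset.mem_univ _)
    (fun x _ => Finset.mem_range.mpr (ZMod.val_lt x))
    (fun a ha => ZMod.val_natCast_of_lt (Finset.mem_range.mp ha))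
    (fun x _ => ZMod.natCast_rightInverse x)
    (fun a _ => rfl)

theorem ideal_autocorrelation_gauss_like (n : ℕ) (hn : n % 4 = 3) (s : ZMod n → ℤ)
    (hs : ∀ x, s x = 1 ∨ s x = -1)
    (hauto : ∀ τ : ZMod n, τ ≠ 0 →
      ∑ l ∈ Finset.range n, s (l : ZMod n) * s ((l : ZMod n) + τ) = -1)
    (π : ℕ) (hπ : π.Prime) (hπ7 : 7 ≤ π) (hdvd : π ∣ 4 ^ n - 1) :
    (∑ l ∈ Finset.range n, ((s (l : ZMod n) : ZMod π) * 4 ^ (2 * l))) *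
      (∑ m ∈ Finset.range n, ((s (m : ZMod n) : ZMod π) * ((4 : ZMod π)⁻¹) ^ (2 * m))) =
      (n : ZMod π) + 1 := by
  haveI : Fact π.Prime := ⟨hπ⟩
  haveI : NeZero n := ⟨by omega⟩
  have hn1 : 1 ≤ n := by omega
  set K := ZMod π
  -- 4^n = 1 in K
  have h4n : (4 : K) ^ n = 1 := by
    have h1 : (1:ℕ) ≤ 4 ^ n := Nat.one_le_pow _ _ (by norm_num)
    have := (ZMod.natCast_eq_zero_iff _ _).mpr hdvd
    rw [Nat.cast_sub h1] at this
    push_cast at this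
    linear_combination this
  have h4 : (4 : K) ≠ 0 := by
    intro h
    rw [h, zero_pow (by omega : n ≠ 0)] at h4n
    exact zero_ne_one h4n
  have hinv : (4 : K) * (4 : K)⁻¹ = 1 := mul_inv_cancel₀ h4
  set c : K := (4 : K) ^ 2 with hc
  set d : K := ((4 : K)⁻¹) ^ 2 with hd
  have hcn : c ^ n = 1 := by rw [hc, ← pow_mul, mul_comm, pow_mul, h4n, one_pow]
  have hinvn : ((4:K)⁻¹) ^ n = 1 := by
    have := congrArg (· ^ n) hinv
    simpa [mul_pow, h4n] using this
  have hdn : d ^ n = 1 := by rw [hd, ← pow_mul, mul_comm, pow_mul, hinvn, one_pow]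
  have hcd : c * d = 1 := by rw [hc, hd, ← mul_pow, hinv, one_pow]
  -- rewrite the two sums over ZMod n
  set F : ZMod n → K := fun x => (s x : K) * c ^ x.val with hF
  set H : ZMod n → K := fun y => (s y : K) * d ^ y.val with hH
  have e1 : (∑ l ∈ Finset.range n, ((s (l : ZMod n) : K) * 4 ^ (2 * l))) = ∑ x : ZMod n, F x := by
    rw [← sum_range_eq_sum_zmod F]
    refine Finset.sum_congr rfl fun l hl => ?_
    rw [hF]
    simp only []
    rw [ZMod.val_natCast_of_lt (Finset.mem_range.mp hl), hc, ← pow_mul]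
  have e2 : (∑ m ∈ Finset.range n, ((s (m : ZMod n) : K) * ((4:K)⁻¹) ^ (2 * m)))
      = ∑ y : ZMod n, H y := by
    rw [← sum_range_eq_sum_zmod H]
    refine Finset.sum_congr rfl fun l hl => ?_
    rw [hH]
    simp only []
    rw [ZMod.val_natCast_of_lt (Finset.mem_range.mp hl), hd, ← pow_mul]
  rw [e1, e2]
  -- key pointwise identity
  have key : ∀ y t : ZMod n, F (y + t) * H y = ((s (y + t) * s y : ℤ) : K) * c ^ t.val := by
    intro y t
    have hv : c ^ (y + t).val = c ^ y.val * c ^ t.val := by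
      rw [ZMod.val_add, ← pow_mod_eq' hcn, pow_add]
    rw [hF, hH]
    simp only []
    rw [hv]
    rw [Int.cast_mul]
    have : c ^ y.val * d ^ y.val = 1 := by rw [← mul_pow, hcd, one_pow]
    calc (s (y+t) : K) * (c ^ y.val * c ^ t.val) * ((s y : K) * d ^ y.val)
        = ((s (y+t) : K) * (s y : K)) * c ^ t.val * (c ^ y.val * d ^ y.val) := by ring
      _ = ((s (y+t) : K) * (s y : K)) * c ^ t.val := by rw [this, mul_one]
  -- expand the product
  have expand : (∑ x : ZMod n, F x) * (∑ y : ZMod n, H y)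
      = ∑ t : ZMod n, ((∑ y : ZMod n, s (y + t) * s y : ℤ) : K) * c ^ t.val := by
    rw [Finset.sum_mul_sum]
    -- ∑ x ∑ y F x * H y
    have reindex : ∀ y : ZMod n, (∑ x : ZMod n, F x * H y) = ∑ t : ZMod n, F (y + t) * H y := by
      intro y
      exact (Equiv.sum_comp (Equiv.addLeft y) (fun x => F x * H y)).symm
    rw [Finset.sum_comm]
    calc ∑ y : ZMod n, ∑ x : ZMod n, F x * H y
        = ∑ y : ZMod n, ∑ t : ZMod n, F (y + t) * H y := by
          exact Finset.sum_congr rfl fun y _ => reindex y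
      _ = ∑ t : ZMod n, ∑ y : ZMod n, F (y + t) * H y := Finset.sum_comm
      _ = ∑ t : ZMod n, ((∑ y : ZMod n, s (y + t) * s y : ℤ) : K) * c ^ t.val := by
          refine Finset.sum_congr rfl fun t _ => ?_
          rw [Int.cast_sum]
          rw [Finset.sum_mul]
          refine Finset.sum_congr rfl fun y _ => ?_
          rw [key y t, Int.cast_mul]
  rw [expand]
  -- autocorrelation values
  have auto0 : (∑ y : ZMod n, s (y + 0) * s y : ℤ) = n := by
    simp only [add_zero]
    have : ∀ y : ZMod n, s y * s y = 1 := by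
      intro y; rcases hs y with h | h <;> rw [h] <;> norm_num
    simp [this, ZMod.card]
  have autot : ∀ t : ZMod n, t ≠ 0 → (∑ y : ZMod n, s (y + t) * s y : ℤ) = -1 := by
    intro t ht
    rw [← hauto t ht, ← sum_range_eq_sum_zmod (fun y => s (y + t) * s y)]
    exact Finset.sum_congr rfl fun l _ => mul_comm _ _
  -- geometric sum is zero
  have hgeom : (∑ t : ZMod n, c ^ t.val) = 0 := by
    have hr : (∑ t : ZMod n, c ^ t.val) = ∑ j ∈ Finset.range n, c ^ j := by
      rw [← sum_range_eq_sum_zmod (fun x => c ^ x.val)]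
      exact Finset.sum_congr rfl fun l hl => by
        rw [ZMod.val_natCast_of_lt (Finset.mem_range.mp hl)]
    have hg : (∑ j ∈ Finset.range n, c ^ j) * (c - 1) = c ^ n - 1 := geom_sum_mul c n
    rw [hcn, sub_self] at hg
    have h15 : c - 1 ≠ 0 := by
      intro h
      have hc15 : ((15 : ℕ) : K) = 0 := by
        push_cast
        rw [hc] at h
        linear_combination h
      have hdvd15 : π ∣ 15 := (ZMod.natCast_eq_zero_iff _ _).mp hc15
      have : π ∣ 3 * 5 := by norm_num at hdvd15 ⊢; exact hdvd15
      rcases (Nat.Prime.dvd_mul hπ).mp this with h' | h'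
      · have := Nat.le_of_dvd (by norm_num) h'; omega
      · have := Nat.le_of_dvd (by norm_num) h'; omega
    rw [hr]
    rcases mul_eq_zero.mp hg with h | h
    · exact h
    · exact absurd h h15
  -- split off t = 0
  rw [← Finset.add_sum_erase _ _ (Finset.mem_univ (0 : ZMod n))]
  have h0term : ((∑ y : ZMod n, s (y + 0) * s y : ℤ) : K) * c ^ (0 : ZMod n).val = (n : K) := by
    rw [auto0, ZMod.val_zero, pow_zero, mul_one]; push_cast; ring
  rw [h0term]
  have hrest : ∑ t ∈ Finset.univ.erase (0 : ZMod n),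
      ((∑ y : ZMod n, s (y + t) * s y : ℤ) : K) * c ^ t.val
      = ∑ t ∈ Finset.univ.erase (0 : ZMod n), (-1 : K) * c ^ t.val := by
    refine Finset.sum_congr rfl fun t ht => ?_
    rw [autot t (Finset.ne_of_mem_erase ht)]
    push_cast; ring
  rw [hrest]
  have e3 : ∑ t ∈ Finset.univ.erase (0 : ZMod n), (-1 : K) * c ^ t.val
      = -(∑ t ∈ Finset.univ.erase (0 : ZMod n), c ^ t.val) := by
    rw [← Finset.sum_neg_distrib]
    exact Finset.sum_congr rfl fun t _ => by ring
  have hsum1 : (1 : K) + ∑ t ∈ Finset.univ.erase (0 : ZMod n), c ^ t.val = 0 := by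
    have := Finset.add_sum_erase Finset.univ (fun t : ZMod n => c ^ t.val)
      (Finset.mem_univ (0 : ZMod n))
    rw [hgeom] at this
    simp only [ZMod.val_zero, pow_zero] at this
    exact this
  linear_combination e3 - hsum1
end

section
/- Let q = 2^k with k ≥ 2, n = q - 1, θ a primitive element of F_q, and T : F_q → F_2 the trace map. Let R = ∑_{λ=0}^{n-1} (-1)^(T(θ^λ)) 4^(2λ) and R̄ = ∑_{λ=0}^{n-1} (-1)^(T(θ^λ)) 4^(-2λ) computed in Z/(4^(2n)-1). Then R̄ * R ≡ n + 1 - (4^n + 1)/5 (mod 4^n + 1). -/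
open Finset

private lemma chi_add (a b : ZMod 2) :
    ((-1 : ℤ)) ^ ((a + b).val) = ((-1 : ℤ)) ^ a.val * ((-1 : ℤ)) ^ b.val := by revert a b; decide

private lemma sum_char_zero (F : Type*) [Field F] [Fintype F] [Algebra (ZMod 2) F] :
    ∑ x : F, (-1 : ℤ) ^ (Algebra.trace (ZMod 2) F x).val = 0 := by
  have htr : Algebra.trace (ZMod 2) F ≠ 0 := Algebra.trace_ne_zero (ZMod 2) F
  have hb : ∃ b : F, Algebra.trace (ZMod 2) F b = 1 := by
    by_contra h
    push_neg at h
    apply htr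
    ext x
    have h01 : ∀ a : ZMod 2, a ≠ 1 → a = 0 := by decide
    simpa using h01 _ (h x)
  obtain ⟨b, hb⟩ := hb
  have key : ∑ x : F, (-1 : ℤ) ^ (Algebra.trace (ZMod 2) F (x + b)).val
      = ∑ x : F, (-1 : ℤ) ^ (Algebra.trace (ZMod 2) F x).val :=
    Fintype.sum_equiv (Equiv.addRight b) _ _ (fun x => rfl)
  have key2 : ∀ x : F, (-1 : ℤ) ^ (Algebra.trace (ZMod 2) F (x + b)).val
      = -((-1 : ℤ) ^ (Algebra.trace (ZMod 2) F x).val) := by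
    intro x
    rw [map_add, chi_add, hb]
    norm_num [ZMod.val_one]
  simp only [key2, Finset.sum_neg_distrib] at key
  linarith [key]

private lemma sum_char_mul (F : Type*) [Field F] [Fintype F] [Algebra (ZMod 2) F]
    (c : F) (hc : c ≠ 0) :
    ∑ x : F, (-1 : ℤ) ^ (Algebra.trace (ZMod 2) F (c * x)).val = 0 := by
  rw [Fintype.sum_equiv (Equiv.mulLeft₀ c hc)
    (fun x => (-1 : ℤ) ^ (Algebra.trace (ZMod 2) F (c * x)).val)
    (fun x => (-1 : ℤ) ^ (Algebra.trace (ZMod 2) F x).val) (fun x => rfl)]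
  exact sum_char_zero F

private lemma sum_char_erase (F : Type*) [Field F] [Fintype F] [DecidableEq F] [Algebra (ZMod 2) F]
    (c : F) (hc : c ≠ 0) :
    ∑ x ∈ Finset.univ.erase (0 : F), (-1 : ℤ) ^ (Algebra.trace (ZMod 2) F (c * x)).val = -1 := by
  have h := Finset.sum_erase_add Finset.univ
    (fun x => (-1 : ℤ) ^ (Algebra.trace (ZMod 2) F (c * x)).val) (Finset.mem_univ (0 : F))
  rw [sum_char_mul F c hc] at h
  simp only [mul_zero, map_zero, ZMod.val_zero, pow_zero] at h
  omega

theorem m_sequence_gauss_like (k : ℕ) (hk : 2 ≤ k) (F : Type*) [Field F] [Fintype F]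
    [Algebra (ZMod 2) F] (hcard : Fintype.card F = 2 ^ k) (n : ℕ) (hn : n = 2 ^ k - 1)
    (θ : F) (hθ : orderOf θ = n) :
    (∑ l ∈ Finset.range n,
        ((-1 : ZMod (4 ^ n + 1)) ^ (Algebra.trace (ZMod 2) F (θ ^ l)).val *
          ((4 : ZMod (4 ^ n + 1))⁻¹) ^ (2 * l)) ) *
      (∑ l ∈ Finset.range n,
        ((-1 : ZMod (4 ^ n + 1)) ^ (Algebra.trace (ZMod 2) F (θ ^ l)).val *
          (4 : ZMod (4 ^ n + 1)) ^ (2 * l))) =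
      (n : ZMod (4 ^ n + 1)) + 1 - (((4 ^ n + 1) / 5 : ℕ) : ZMod (4 ^ n + 1)) := by
  classical
  have hk4 : 4 ≤ 2 ^ k := by calc (4:ℕ) = 2^2 := by norm_num
                                 _ ≤ 2^k := Nat.pow_le_pow_right (by norm_num) hk
  have hn3 : 3 ≤ n := by omega
  haveI hchar : CharP F 2 := charP_of_injective_algebraMap (algebraMap (ZMod 2) F).injective 2
  have hθ0 : θ ≠ 0 := by
    intro h
    rw [h] at hθ
    have h1 := pow_orderOf_eq_one (0:F)
    rw [hθ, zero_pow (by omega : n ≠ 0)] at h1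
    exact zero_ne_one h1
  have hInj : Set.InjOn (fun l => θ ^ l) (Set.Iio n) := by
    have hu : IsUnit θ := hθ0.isUnit
    have hou : orderOf hu.unit = n := by
      rw [← orderOf_units, hu.unit_spec, hθ]
    intro a ha b hb hab
    have : hu.unit ^ a = hu.unit ^ b := by
      apply Units.ext
      simpa [hu.unit_spec] using hab
    exact pow_injOn_Iio_orderOf (by rw [hou]; exact ha) (by rw [hou]; exact hb) this
  have himg : Finset.image (fun l => θ ^ l) (Finset.range n) = Finset.univ.erase (0 : F) := by
    apply Finset.eq_of_subset_of_card_le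
    · intro x hx
      obtain ⟨l, _, rfl⟩ := Finset.mem_image.mp hx
      exact Finset.mem_erase.mpr ⟨pow_ne_zero _ hθ0, Finset.mem_univ _⟩
    · rw [Finset.card_erase_of_mem (Finset.mem_univ _), Finset.card_univ, hcard,
        Finset.card_image_of_injOn (by simpa using hInj), Finset.card_range]
      omega
  have hsum : ∀ g : F → ℤ, ∑ l ∈ Finset.range n, g (θ ^ l) = ∑ x ∈ Finset.univ.erase (0:F), g x := by
    intro g
    rw [← himg, Finset.sum_image (by intro a ha b hb; exact hInj (by simpa using ha) (by simpa using hb))]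
  set T := Algebra.trace (ZMod 2) F with hT
  set ε : ℕ → ℤ := fun l => (-1 : ℤ) ^ (T (θ ^ l)).val with hε
  have hper : ∀ a : ℕ, ε (a % n) = ε a := by
    intro a
    have h1 := pow_mod_orderOf θ a
    rw [hθ] at h1
    simp only [hε, h1]
  have hcor0 : ∑ l ∈ range n, ε l * ε l = (n : ℤ) := by
    have h1 : ∀ l, ε l * ε l = 1 := by
      intro l
      simp only [hε, ← pow_add]
      exact Even.neg_one_pow ⟨_, rfl⟩
    simp [h1]
  have hcor : ∀ d, d < n → d ≠ 0 → ∑ l ∈ range n, ε l * ε (l + d) = -1 := by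
    intro d hd hd0
    have hc : (1 + θ ^ d) ≠ 0 := by
      intro h
      have h1 : θ ^ d = -1 := eq_neg_of_add_eq_zero_right h
      rw [CharTwo.neg_eq] at h1
      have h2 := orderOf_dvd_of_pow_eq_one h1
      rw [hθ] at h2
      exact hd0 (Nat.eq_zero_of_dvd_of_lt h2 hd)
    calc ∑ l ∈ range n, ε l * ε (l + d)
        = ∑ l ∈ range n, (-1:ℤ) ^ (T ((1 + θ ^ d) * θ ^ l)).val := by
          refine sum_congr rfl fun l hl => ?_
          have h3 : (1 + θ ^ d) * θ ^ l = θ ^ l + θ ^ (l + d) := by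
            rw [add_mul, one_mul, ← pow_add, add_comm d l]
          simp only [hε]
          rw [← chi_add, ← map_add, ← h3]
      _ = ∑ x ∈ univ.erase (0:F), (-1:ℤ) ^ (T ((1 + θ ^ d) * x)).val :=
          hsum (fun x => (-1:ℤ) ^ (T ((1 + θ ^ d) * x)).val)
      _ = -1 := sum_char_erase F _ hc
  set N := 4 ^ n + 1 with hNdef
  have h4n : (4 : ZMod N) ^ n = -1 := by
    have h0 : ((4 ^ n + 1 : ℕ) : ZMod N) = 0 := by
      rw [hNdef]; exact ZMod.natCast_self N
    push_cast at h0
    exact eq_neg_of_add_eq_zero_left h0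
  have h42n : (4 : ZMod N) ^ (2 * n) = 1 := by
    rw [mul_comm, pow_mul, h4n]; ring
  have hunit4 : IsUnit (4 : ZMod N) := by
    apply IsUnit.of_mul_eq_one ((4 : ZMod N) ^ (2 * n - 1))
    rw [← pow_succ']
    have he : 2 * n - 1 + 1 = 2 * n := by omega
    rw [he, h42n]
  have hinvpow : ∀ l, l < n → ((4 : ZMod N)⁻¹) ^ (2 * l) = (4 : ZMod N) ^ (2 * (n - l)) := by
    intro l hl
    have h1 : ((4 : ZMod N)⁻¹) ^ (2 * l) * (4 : ZMod N) ^ (2 * l) = 1 := by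
      rw [← mul_pow, ZMod.inv_mul_of_unit _ hunit4, one_pow]
    have h2 : (4 : ZMod N) ^ (2 * (n - l)) * (4 : ZMod N) ^ (2 * l) = 1 := by
      rw [← pow_add]
      have h3 : 2 * (n - l) + 2 * l = 2 * n := by omega
      rw [h3, h42n]
    calc ((4 : ZMod N)⁻¹) ^ (2 * l)
        = ((4 : ZMod N)⁻¹) ^ (2 * l) * ((4 : ZMod N) ^ (2 * (n - l)) * (4 : ZMod N) ^ (2 * l)) := by
          rw [h2, mul_one]
      _ = (4 : ZMod N) ^ (2 * (n - l)) * (((4 : ZMod N)⁻¹) ^ (2 * l) * (4 : ZMod N) ^ (2 * l)) := by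
          ring
      _ = (4 : ZMod N) ^ (2 * (n - l)) := by rw [h1, mul_one]
  have hpow2 : ∀ a : ℕ, (4 : ZMod N) ^ (2 * a) = (4 : ZMod N) ^ (2 * (a % n)) := by
    intro a
    conv_lhs => rw [← Nat.div_add_mod a n]
    rw [show 2 * (n * (a / n) + a % n) = 2 * n * (a / n) + 2 * (a % n) from by ring,
      pow_add, pow_mul, h42n, one_pow, one_mul]
  have cast1 : ∀ l : ℕ, ((ε l : ℤ) : ZMod N) = (-1 : ZMod N) ^ (T (θ ^ l)).val := by
    intro l; simp only [hε]; push_cast; ring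
  calc (∑ l ∈ range n, (-1 : ZMod N) ^ (T (θ ^ l)).val * ((4 : ZMod N)⁻¹) ^ (2 * l)) *
        (∑ l ∈ range n, (-1 : ZMod N) ^ (T (θ ^ l)).val * (4 : ZMod N) ^ (2 * l))
      = ∑ l ∈ range n, ∑ m ∈ range n,
          ((ε l * ε m : ℤ) : ZMod N) * (4 : ZMod N) ^ (2 * (m + (n - l))) := by
        rw [Finset.sum_mul_sum]
        refine sum_congr rfl fun l hl => sum_congr rfl fun m hm => ?_
        rw [← cast1, ← cast1, hinvpow l (mem_range.mp hl)]
        push_cast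
        rw [show 2 * (m + (n - l)) = 2 * (n - l) + 2 * m from by ring, pow_add]
        ring
    _ = ∑ l ∈ range n, ∑ d ∈ range n,
          ((ε l * ε (l + d) : ℤ) : ZMod N) * (4 : ZMod N) ^ (2 * d) := by
        refine sum_congr rfl fun l hl => ?_
        have hl' := mem_range.mp hl
        refine Finset.sum_nbij' (fun m => (m + (n - l)) % n) (fun d => (l + d) % n)
          (fun m hm => mem_range.mpr (Nat.mod_lt _ (by omega)))
          (fun d hd => mem_range.mpr (Nat.mod_lt _ (by omega))) ?_ ?_ ?_
        · intro m hm
          have hm' := mem_range.mp hm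
          show (l + (m + (n - l)) % n) % n = m
          rw [Nat.add_mod, Nat.mod_mod_of_dvd _ dvd_rfl, ← Nat.add_mod,
            show l + (m + (n - l)) = m + n from by omega, Nat.add_mod_right, Nat.mod_eq_of_lt hm']
        · intro d hd
          have hd' := mem_range.mp hd
          show ((l + d) % n + (n - l)) % n = d
          rw [Nat.add_mod, Nat.mod_mod_of_dvd _ dvd_rfl, ← Nat.add_mod,
            show l + d + (n - l) = d + n from by omega, Nat.add_mod_right, Nat.mod_eq_of_lt hd']
        · intro m hm
          have hm' := mem_range.mp hm
          have e1 : (l + (m + (n - l)) % n) % n = m := by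
            rw [Nat.add_mod, Nat.mod_mod_of_dvd _ dvd_rfl, ← Nat.add_mod,
              show l + (m + (n - l)) = m + n from by omega, Nat.add_mod_right,
              Nat.mod_eq_of_lt hm']
          have e2 : ε (l + (m + (n - l)) % n) = ε m := by
            rw [← hper (l + (m + (n - l)) % n), e1]
          rw [e2, ← hpow2 (m + (n - l))]
    _ = ∑ d ∈ range n, ((∑ l ∈ range n, ε l * ε (l + d) : ℤ) : ZMod N) * (4 : ZMod N) ^ (2 * d) := by
        rw [Finset.sum_comm]
        refine sum_congr rfl fun d _ => ?_
        rw [Int.cast_sum, Finset.sum_mul]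
    _ = ∑ d ∈ range n, (((if d = 0 then (n : ℤ) else -1) : ℤ) : ZMod N) * (4 : ZMod N) ^ (2 * d) := by
        refine sum_congr rfl fun d hd => ?_
        have h1 : (∑ l ∈ range n, ε l * ε (l + d)) = (if d = 0 then (n : ℤ) else -1) := by
          by_cases h : d = 0
          · subst h
            rw [if_pos rfl]
            simpa using hcor0
          · rw [if_neg h]
            exact hcor d (mem_range.mp hd) h
        rw [h1]
    _ = (n : ZMod N) + 1 - ∑ d ∈ range n, (16 : ZMod N) ^ d := by
        have hterm : ∀ d ∈ range n,
            (((if d = 0 then (n : ℤ) else -1) : ℤ) : ZMod N) * (4 : ZMod N) ^ (2 * d)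
            = (if d = 0 then ((n : ZMod N) + 1) * (16 : ZMod N) ^ d else 0) - (16 : ZMod N) ^ d := by
          intro d _
          have h16 : (4 : ZMod N) ^ (2 * d) = (16 : ZMod N) ^ d := by
            rw [pow_mul]; norm_num
          rw [h16]
          by_cases h : d = 0
          · subst h
            simp only [if_pos rfl, pow_zero, mul_one]
            push_cast
            ring
          · simp only [if_neg h]
            push_cast
            ring
        rw [Finset.sum_congr rfl hterm, Finset.sum_sub_distrib,
          Finset.sum_ite_eq' (range n) 0 (fun d => ((n : ZMod N) + 1) * (16 : ZMod N) ^ d),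
          if_pos (mem_range.mpr (by omega : 0 < n))]
        rw [pow_zero, mul_one]
    _ = (n : ZMod N) + 1 - ((N / 5 : ℕ) : ZMod N) := by
        congr 1
        have hodd : Odd n := by
          rw [hn]
          exact Nat.Even.sub_odd Nat.one_le_two_pow
            (Nat.even_pow.mpr ⟨even_two, by omega⟩) odd_one
        have h5 : (5 : ℤ) ∣ (4 : ℤ) ^ n + 1 := by
          have hm : (4 : ℤ) ≡ -1 [ZMOD 5] := by decide
          have h4 := hm.pow n
          rw [Odd.neg_one_pow hodd] at h4
          have hd := h4.dvd
          generalize (4 : ℤ) ^ n = a at hd ⊢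
          omega
        have h3 : (3 : ℤ) ∣ (4 : ℤ) ^ n - 1 := by
          have hm : (4 : ℤ) ≡ 1 [ZMOD 3] := by decide
          have h4 := hm.pow n
          rw [one_pow] at h4
          have hd := h4.dvd
          generalize (4 : ℤ) ^ n = a at hd ⊢
          omega
        obtain ⟨M, hM⟩ := h3
        obtain ⟨P, hP⟩ := h5
        have h16n : (16 : ℤ) ^ n = ((4 : ℤ) ^ n) ^ 2 := by
          rw [show (16 : ℤ) = 4 ^ 2 from by norm_num, ← pow_mul, mul_comm, pow_mul]
        have hgeom : (15 : ℤ) * ∑ d ∈ range n, (16 : ℤ) ^ d = (16 : ℤ) ^ n - 1 := by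
          have := mul_geom_sum (16 : ℤ) n
          linarith [this]
        have hSz : (∑ d ∈ range n, (16 : ℤ) ^ d) = M * P := by
          apply mul_left_cancel₀ (show (15 : ℤ) ≠ 0 from by norm_num)
          rw [hgeom, h16n]
          linear_combination (4 ^ n + 1) * hM + 3 * M * hP
        have h5M : (5 : ℤ) ∣ M - 1 := by
          have key : 3 * (M - 1) = 5 * (P - 1) := by linarith [hM, hP]
          omega
        obtain ⟨t, ht⟩ := h5M
        have hNz : (N : ℤ) = (4 : ℤ) ^ n + 1 := by rw [hNdef]; push_cast; ring
        have hdvd5 : (5 : ℕ) ∣ N := by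
          have h1 : (5 : ℤ) ∣ (N : ℤ) := by rw [hNz]; exact ⟨P, hP⟩
          exact_mod_cast h1
        have hN5 : ((N / 5 : ℕ) : ℤ) = P := by
          have hq : N / 5 * 5 = N := Nat.div_mul_cancel hdvd5
          have h1 : ((N / 5 : ℕ) : ℤ) * 5 = (N : ℤ) := by exact_mod_cast congrArg Nat.cast hq
          rw [hNz, hP] at h1
          linarith
        have hcast : (∑ d ∈ range n, (16 : ZMod N) ^ d)
            = ((∑ d ∈ range n, (16 : ℤ) ^ d : ℤ) : ZMod N) := by push_cast; rfl
        have hcast2 : ((N / 5 : ℕ) : ZMod N) = ((P : ℤ) : ZMod N) := by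
          rw [← hN5]; norm_cast
        rw [hcast, hcast2, ZMod.intCast_eq_intCast_iff]
        rw [Int.modEq_iff_dvd]
        refine ⟨-t, ?_⟩
        rw [hSz, hNz, hP]
        have hMt : M = 5 * t + 1 := by omega
        rw [hMt]
        ring
end

section
/- Let p be an odd prime and π a prime divisor of (4^p + 1)/5 with π ∉ {3, 5}. Then the multiplicative order of 4 modulo π is 2p, and hence 2p divides π - 1. -/
theorem order_of_four_mod_prime_divisor (p : ℕ) (hp : p.Prime) (hodd : Odd p)
    (π : ℕ) (hπ : π.Prime) (h3 : π ≠ 3) (h5 : π ≠ 5) (hdvd : π ∣ (4 ^ p + 1) / 5) :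
    orderOf (4 : ZMod π) = 2 * p ∧ 2 * p ∣ π - 1 := by
  haveI : Fact π.Prime := ⟨hπ⟩
  -- 5 divides 4^p + 1
  have h5d : 5 ∣ 4 ^ p + 1 := by
    have : ((4 ^ p + 1 : ℕ) : ZMod 5) = 0 := by
      push_cast
      have h4 : (4 : ZMod 5) = -1 := by decide
      rw [h4, hodd.neg_one_pow]; ring
    exact (ZMod.natCast_eq_zero_iff _ _).mp this
  have hπd : π ∣ 4 ^ p + 1 := hdvd.trans (Nat.div_dvd_of_dvd h5d)
  -- π ≠ 2
  have hπ2 : π ≠ 2 := by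
    rintro rfl
    have hodd' : ¬ 2 ∣ 4 ^ p + 1 := by
      have : 2 ∣ 4 ^ p := dvd_pow (by norm_num) hp.ne_zero
      omega
    exact hodd' hπd
  have h2lt : 2 < π := lt_of_le_of_ne hπ.two_le (Ne.symm hπ2)
  haveI : Fact (2 < π) := ⟨h2lt⟩
  -- 4^p = -1 in ZMod π
  have hkey : (4 : ZMod π) ^ p = -1 := by
    have : ((4 ^ p + 1 : ℕ) : ZMod π) = 0 := (ZMod.natCast_eq_zero_iff _ _).mpr hπd
    push_cast at this
    linear_combination this
  -- order divides 2p
  have hord2p : orderOf (4 : ZMod π) ∣ 2 * p := by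
    apply orderOf_dvd_of_pow_eq_one
    rw [mul_comm, pow_mul, hkey]
    ring
  -- order does not divide p
  have hnotp : ¬ orderOf (4 : ZMod π) ∣ p := by
    intro h
    have h1 : (4 : ZMod π) ^ p = 1 := orderOf_dvd_iff_pow_eq_one.mp h
    rw [hkey] at h1
    exact ZMod.neg_one_ne_one h1
  -- order ≠ 1
  have hne1 : orderOf (4 : ZMod π) ≠ 1 := by
    intro h
    have h1 : (4 : ZMod π) = 1 := orderOf_eq_one_iff.mp h
    have : ((3 : ℕ) : ZMod π) = 0 := by push_cast; linear_combination h1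
    have := (ZMod.natCast_eq_zero_iff _ _).mp this
    exact h3 ((Nat.prime_dvd_prime_iff_eq hπ (by norm_num)).mp this)
  -- order ≠ 2
  have hne2 : orderOf (4 : ZMod π) ≠ 2 := by
    intro h
    have h1 := pow_orderOf_eq_one (4 : ZMod π)
    rw [h] at h1
    have : ((15 : ℕ) : ZMod π) = 0 := by push_cast; linear_combination h1
    have h15 := (ZMod.natCast_eq_zero_iff _ _).mp this
    have : π ∣ 3 * 5 := by norm_num at h15 ⊢; exact h15
    rcases (Nat.Prime.dvd_mul hπ).mp this with h' | h'
    · exact h3 ((Nat.prime_dvd_prime_iff_eq hπ (by norm_num)).mp h')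
    · exact h5 ((Nat.prime_dvd_prime_iff_eq hπ (by norm_num)).mp h')
  -- p divides the order
  have hpord : p ∣ orderOf (4 : ZMod π) := by
    by_contra hnd
    have hcop : Nat.Coprime p (orderOf (4 : ZMod π)) :=
      (Nat.Prime.coprime_iff_not_dvd hp).mpr hnd
    have h2 : orderOf (4 : ZMod π) ∣ 2 :=
      Nat.Coprime.dvd_of_dvd_mul_right hcop.symm hord2p
    rcases (Nat.dvd_prime Nat.prime_two).mp h2 with h | h
    · exact hne1 h
    · exact hne2 h
  -- conclude order = 2p
  obtain ⟨k, hk⟩ := hpord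
  have hkd : k ∣ 2 := by
    rcases hord2p with ⟨m, hm⟩
    have hp0 : 0 < p := hp.pos
    rw [hk] at hm
    have h2 : p * 2 = p * (k * m) := by rw [mul_comm p 2, hm, mul_assoc]
    exact ⟨m, Nat.eq_of_mul_eq_mul_left hp0 h2⟩
  have hkle : k ≤ 2 := Nat.le_of_dvd two_pos hkd
  have hord : orderOf (4 : ZMod π) = 2 * p := by
    interval_cases k
    · rw [hk] at hord2p
      simp at hord2p
      omega
    · simp at hk
      exact absurd (hk ▸ dvd_refl p) hnotp
    · omega
  refine ⟨hord, ?_⟩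
  rw [← hord]
  apply orderOf_dvd_of_pow_eq_one
  apply ZMod.pow_card_sub_one_eq_one
  intro h0
  have : ((4 : ℕ) : ZMod π) = 0 := by push_cast; exact h0
  have := (ZMod.natCast_eq_zero_iff _ _).mp this
  have : π ∣ 2 * 2 := by norm_num at this ⊢; exact this
  rcases (Nat.Prime.dvd_mul hπ).mp this with h' | h' <;>
    exact hπ2 ((Nat.prime_dvd_prime_iff_eq hπ (by norm_num)).mp h')
end

section
/- Let p be an odd prime. Then gcd(2(p+1), (4^p + 1)/5) = 1. -/
theorem gcd_two_p_add_one (p : ℕ) (hp : p.Prime) (hodd : Odd p) :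
    Nat.gcd (2 * (p + 1)) ((4 ^ p + 1) / 5) = 1 := by
  -- 5 divides 4^p + 1
  have h5 : 5 ∣ 4 ^ p + 1 := by
    have : ((4 ^ p + 1 : ℕ) : ZMod 5) = 0 := by
      push_cast
      rw [show (4 : ZMod 5) = -1 by decide, hodd.neg_one_pow]
      ring
    exact (ZMod.natCast_eq_zero_iff _ _).mp this
  set N := (4 ^ p + 1) / 5 with hNdef
  have hN : 5 * N = 4 ^ p + 1 := Nat.mul_div_cancel' h5
  have hp2 : p % 2 = 1 := Nat.odd_iff.mp hodd
  have hp3 : 3 ≤ p := by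
    have := hp.two_le
    omega
  have h2pow : (2 : ℕ) ∣ 4 ^ p := dvd_pow (by norm_num) (by omega)
  by_contra hg
  set g := Nat.gcd (2 * (p + 1)) N with hgdef
  have hg1 : g ≠ 1 := hg
  set q := g.minFac with hqdef
  have hq : q.Prime := Nat.minFac_prime hg1
  have hqg : q ∣ g := Nat.minFac_dvd g
  have hq1 : q ∣ 2 * (p + 1) := hqg.trans (Nat.gcd_dvd_left _ _)
  have hqN : q ∣ N := hqg.trans (Nat.gcd_dvd_right _ _)
  have hqA : q ∣ 4 ^ p + 1 := hqN.trans ⟨5, by omega⟩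
  -- q is odd
  have hq2 : q ≠ 2 := by
    intro h
    obtain ⟨k, hk⟩ := hqN
    obtain ⟨m, hm⟩ := h2pow
    rw [h] at hk
    omega
  have hq3 : 3 ≤ q := by
    have := hq.two_le
    omega
  -- q divides p+1
  have hqp1 : q ∣ p + 1 := by
    have hcop : Nat.Coprime q 2 := by
      rw [Nat.coprime_primes hq Nat.prime_two]
      exact hq2
    exact (Nat.Coprime.dvd_of_dvd_mul_left hcop hq1)
  have hqle : q ≤ p + 1 := Nat.le_of_dvd (by omega) hqp1
  haveI : Fact q.Prime := ⟨hq⟩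
  -- 4^p = -1 in ZMod q
  have hcast : ((4 ^ p + 1 : ℕ) : ZMod q) = 0 :=
    (ZMod.natCast_eq_zero_iff _ _).mpr hqA
  push_cast at hcast
  have hm1 : (4 : ZMod q) ^ p = -1 := by linear_combination hcast
  have h2ne : (2 : ZMod q) ≠ 0 := by
    intro h
    have : ((2 : ℕ) : ZMod q) = 0 := by push_cast; exact h
    have := (ZMod.natCast_eq_zero_iff _ _).mp this
    have := Nat.le_of_dvd (by norm_num) this
    omega
  have h4ne : (4 : ZMod q) ≠ 0 := by
    rw [show (4 : ZMod q) = 2 * 2 by norm_num]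
    exact mul_ne_zero h2ne h2ne
  have hne11 : (-1 : ZMod q) ≠ 1 := by
    intro h
    apply h2ne
    linear_combination -h
  -- order of 4
  set d := orderOf (4 : ZMod q) with hddef
  have hd2p : d ∣ 2 * p := by
    apply orderOf_dvd_of_pow_eq_one
    rw [pow_mul', hm1]
    ring
  have hdq : d ∣ q - 1 :=
    orderOf_dvd_of_pow_eq_one (ZMod.pow_card_sub_one_eq_one h4ne)
  have hdpos : 0 < d := Nat.pos_of_ne_zero (by
    intro h
    rw [h] at hdq
    have := Nat.eq_zero_of_zero_dvd hdq
    omega)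
  have hdle : d ≤ p := by
    have := Nat.le_of_dvd (by omega) hdq
    omega
  -- case on p ∣ d or not
  by_cases hpd : p ∣ d
  · -- d = p, so 4^p = 1 = -1, contradiction
    have hdp : d = p := le_antisymm hdle (Nat.le_of_dvd hdpos hpd)
    have : (4 : ZMod q) ^ p = 1 := by rw [← hdp]; exact pow_orderOf_eq_one _
    exact hne11 (by rw [← hm1, this])
  · -- d ∣ 2, so 4^2 = 1, q ∣ 15
    have hd2 : d ∣ 2 := by
      have hcop : Nat.Coprime d p := ((hp.coprime_iff_not_dvd).mpr hpd).symm
      exact hcop.dvd_of_dvd_mul_right hd2p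
    have h42 : (4 : ZMod q) ^ 2 = 1 := by
      obtain ⟨e, he⟩ := hd2
      calc (4 : ZMod q) ^ 2 = ((4:ZMod q) ^ d) ^ e := by rw [← pow_mul, ← he]
        _ = 1 := by rw [pow_orderOf_eq_one]; exact one_pow e
    have h15 : q ∣ 15 := by
      have : ((15 : ℕ) : ZMod q) = 0 := by push_cast; linear_combination h42
      exact (ZMod.natCast_eq_zero_iff _ _).mp this
    have : q ∣ 3 * 5 := by norm_num at h15 ⊢; exact h15
    rcases hq.dvd_mul.mp this with h | h
    · -- q = 3 : but 3 ∤ 4^p+1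
      have hq3' : q = 3 := (Nat.prime_dvd_prime_iff_eq hq (by norm_num)).mp h
      rw [hq3'] at hqA
      have : ((4 ^ p + 1 : ℕ) : ZMod 3) = 0 :=
        (ZMod.natCast_eq_zero_iff _ _).mpr hqA
      push_cast at this
      rw [show (4 : ZMod 3) = 1 by decide, one_pow] at this
      exact absurd this (by decide)
    · -- q = 5 : then 25 ∣ 4^p+1 and 5 ∣ p+1, contradiction
      have hq5 : q = 5 := (Nat.prime_dvd_prime_iff_eq hq (by norm_num)).mp h
      rw [hq5] at hqN hqp1
      have h25 : 25 ∣ 4 ^ p + 1 := by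
        obtain ⟨k, hk⟩ := hqN
        exact ⟨k, by omega⟩
      have hp5 : p % 5 = 4 := by omega
      have hp10 : p % 10 = 9 := by omega
      obtain ⟨k, hk⟩ : ∃ k, p = 10 * k + 9 := ⟨p / 10, by omega⟩
      have : ((4 ^ p + 1 : ℕ) : ZMod 25) = 0 :=
        (ZMod.natCast_eq_zero_iff _ _).mpr h25
      push_cast at this
      rw [hk, pow_add, pow_mul, show (4 : ZMod 25) ^ 10 = 1 by decide, one_pow, one_mul] at this
      exact absurd this (by decide)
end

section
/- Let p and q = p + 2 be odd primes, n = pq, and N = 5(4^n + 1)/((4^p + 1)(4^q + 1)). Then N is a positive integer and 4^n + 1 = N * ((4^p+1)/5) * ((4^q+1)/5) * 5. -/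
theorem twin_prime_factorization (p q n : ℕ) (hp : p.Prime) (hq : q.Prime)
    (hq2 : q = p + 2) (hodd : Odd p) (hn : n = p * q) :
    ((4 ^ p + 1) * (4 ^ q + 1)) ∣ 5 * (4 ^ n + 1) ∧
    0 < 5 * (4 ^ n + 1) / ((4 ^ p + 1) * (4 ^ q + 1)) ∧
    4 ^ n + 1 =
      (5 * (4 ^ n + 1) / ((4 ^ p + 1) * (4 ^ q + 1))) * ((4 ^ p + 1) / 5) *
        ((4 ^ q + 1) / 5) * 5 := by
  have hoddq : Odd q := by rw [hq2]; exact hodd.add_even (by decide)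
  -- 5 divides 4^m+1 for odd m
  have h5 : ∀ m : ℕ, Odd m → 5 ∣ 4 ^ m + 1 := by
    intro m hm
    obtain ⟨k, rfl⟩ : ∃ k, m = 2 * k + 1 :=
      ⟨m / 2, by have := Nat.odd_iff.mp hm; omega⟩
    have h1 : 4 ^ (2 * k + 1) % 5 = 4 := by
      have h2 : (4:ℕ) ^ (2 * k + 1) = 16 ^ k * 4 := by
        rw [pow_succ, pow_mul]; norm_num
      rw [h2, Nat.mul_mod, Nat.pow_mod]
      norm_num
    omega
  have h5p := h5 p hodd
  have h5q := h5 q hoddq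
  -- divisibility of 4^n+1
  have hApM : 4 ^ p + 1 ∣ 4 ^ n + 1 := by
    have := Odd.nat_add_dvd_pow_add_pow (4 ^ p) 1 hoddq
    rwa [one_pow, ← pow_mul, ← hn] at this
  have hBqM : 4 ^ q + 1 ∣ 4 ^ n + 1 := by
    have := Odd.nat_add_dvd_pow_add_pow (4 ^ q) 1 hodd
    rwa [one_pow, ← pow_mul, mul_comm, ← hn] at this
  -- gcd = 5
  set A := 4 ^ p + 1 with hA
  set B := 4 ^ q + 1 with hB
  set d := Nat.gcd A B with hd
  have hdA : d ∣ A := Nat.gcd_dvd_left A B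
  have hdB : d ∣ B := Nat.gcd_dvd_right A B
  have hgcd : d = 5 := by
    have h5d : 5 ∣ d := Nat.dvd_gcd h5p h5q
    have hsub : d ∣ 15 * 4 ^ p := by
      have : B - A = 15 * 4 ^ p := by
        rw [hA, hB, hq2]
        have : 4 ^ (p + 2) = 16 * 4 ^ p := by ring
        omega
      have := Nat.dvd_sub hdB hdA
      rwa [‹B - A = 15 * 4 ^ p›] at this
    have h2A : ¬ 2 ∣ A := by
      have h2p : (2:ℕ) ∣ 4 ^ p := dvd_trans (by norm_num) (dvd_pow_self 4 hp.ne_zero)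
      rw [hA]
      omega
    have h2d : ¬ 2 ∣ d := fun h => h2A (h.trans hdA)
    have hcop : Nat.Coprime d (4 ^ p) := by
      have h2 : Nat.Coprime 2 d := (Nat.prime_two.coprime_iff_not_dvd).mpr h2d
      have h4 : Nat.Coprime d 4 := by
        have h44 : (4 : ℕ) = 2 ^ 2 := by norm_num
        rw [h44]
        exact Nat.Coprime.pow_right 2 h2.symm
      exact Nat.Coprime.pow_right p h4
    have h15 : d ∣ 15 := (Nat.Coprime.dvd_of_dvd_mul_right hcop) hsub
    have h3A : A % 3 = 2 := by
      rw [hA]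
      have : 4 ^ p % 3 = 1 := by rw [Nat.pow_mod]; norm_num
      omega
    have h3d : ¬ 3 ∣ d := by
      intro h3
      have := h3.trans hdA
      omega
    have hdle : d ≤ 15 := Nat.le_of_dvd (by norm_num) h15
    have hdpos : 0 < d := by omega
    interval_cases d <;> omega
  -- lcm divides 4^n+1
  have hlcm : Nat.lcm A B ∣ 4 ^ n + 1 := Nat.lcm_dvd hApM hBqM
  have hABlcm : A * B = 5 * Nat.lcm A B := by
    rw [← hgcd, hd, Nat.gcd_mul_lcm]
  have hdvd : A * B ∣ 5 * (4 ^ n + 1) := by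
    rw [hABlcm]
    exact mul_dvd_mul_left 5 hlcm
  obtain ⟨c, hc⟩ := hdvd
  have hABpos : 0 < A * B := by positivity
  have hdiv : 5 * (4 ^ n + 1) / (A * B) = c := by
    rw [hc]; exact Nat.mul_div_cancel_left c hABpos
  obtain ⟨a, ha⟩ := h5p
  obtain ⟨b, hb⟩ := h5q
  have hcpos : 0 < c := by
    rcases Nat.eq_zero_or_pos c with h0 | h1
    · exfalso
      rw [h0, mul_zero] at hc
      have hpos : 0 < 5 * (4 ^ n + 1) := by positivity
      omega
    · exact h1
  refine ⟨⟨c, hc⟩, by rw [hdiv]; exact hcpos, ?_⟩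
  rw [hdiv]
  have haq : A / 5 = a := by rw [ha]; exact Nat.mul_div_cancel_left a (by norm_num)
  have hbq : B / 5 = b := by rw [hb]; exact Nat.mul_div_cancel_left b (by norm_num)
  rw [haq, hbq]
  have key : 5 * (4 ^ n + 1) = 5 * (c * a * b * 5) := by
    rw [hc, ha, hb]; ring
  exact Nat.eq_of_mul_eq_mul_left (by norm_num) key
end

section
/- Let n be odd, and let a, b : ZMod n → {0,1} with s(λ) = (-1)^(a(λ)), t(λ) = (-1)^(b(λ)). Define the quaternary interleaved sequence w of period 2n by the Gray map construction: w_i = φ(c_i, d_i) where for i ≡ (μ, λ) under Z_{2n} ≅ Z_2 × Z_n, c_i = a(λ(1-n)/2), d_i = b(λ(1-n)/2) if μ=0 and d_i = 1 - b(λ(1-n)/2) if μ=1, with φ(0,0)=0, φ(0,1)=1, φ(1,1)=2, φ(1,0)=3. Then W(4) = ∑_{i=0}^{2n-1} w_i 4^i satisfies W(4) ≡ -∑_{λ=0}^{n-1} s(λ)t(λ) 4^(2λ) (mod 4^n + 1) and W(4) ≡ -2∑_{λ=0}^{n-1} s(λ) 4^(2λ) (mod 4^n - 1). -/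
lemma myModEq_sum {ι : Type*} (M : ℤ) (s : Finset ι) (f g : ι → ℤ)
    (h : ∀ i ∈ s, f i ≡ g i [ZMOD M]) :
    (∑ i ∈ s, f i) ≡ (∑ i ∈ s, g i) [ZMOD M] := by
  rw [Int.modEq_iff_dvd, ← Finset.sum_sub_distrib]
  exact Finset.dvd_sum fun i hi => (Int.modEq_iff_dvd.1 (h i hi))

lemma myInv1 (n m l : ℕ) (hm : m < n) (hl : l < n) : ((m + l) % n + (n - m)) % n = l := by
  by_cases h : m + l < n
  · rw [Nat.mod_eq_of_lt h, show m + l + (n - m) = l + n by omega, Nat.add_mod_right,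
      Nat.mod_eq_of_lt hl]
  · rw [Nat.mod_eq_sub_mod (le_of_not_gt h), Nat.mod_eq_of_lt (show m + l - n < n by omega),
      show m + l - n + (n - m) = l by omega, Nat.mod_eq_of_lt hl]

lemma myInv2 (n m r : ℕ) (hm : m < n) (hr : r < n) : (m + (r + (n - m)) % n) % n = r := by
  by_cases h : r + (n - m) < n
  · rw [Nat.mod_eq_of_lt h, show m + (r + (n - m)) = r + n by omega, Nat.add_mod_right,
      Nat.mod_eq_of_lt hr]
  · rw [Nat.mod_eq_sub_mod (le_of_not_gt h), Nat.mod_eq_of_lt (show r + (n - m) - n < n by omega),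
      show m + (r + (n - m) - n) = r by omega, Nat.mod_eq_of_lt hr]

lemma myReindex (n m : ℕ) (hm : m < n) (G : ℕ → ℤ) :
    ∑ l ∈ Finset.range n, G ((m + l) % n) = ∑ r ∈ Finset.range n, G r := by
  have hn0 : 0 < n := lt_of_le_of_lt (Nat.zero_le _) hm
  refine Finset.sum_nbij' (fun l => (m + l) % n) (fun r => (r + (n - m)) % n) ?_ ?_ ?_ ?_ ?_
  · intro l hl; exact Finset.mem_range.2 (Nat.mod_lt _ hn0)
  · intro r hr; exact Finset.mem_range.2 (Nat.mod_lt _ hn0)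
  · intro l hl; exact myInv1 n m l hm (Finset.mem_range.1 hl)
  · intro r hr; exact myInv2 n m r hm (Finset.mem_range.1 hr)
  · intro l _; rfl

lemma myKey (n m : ℕ) (hm : m < n) (hm2 : 2 * m = n + 1) (P Q : ℕ → ℤ) (M ε : ℤ)
    (hε : ε * ε = 1) (h4 : (4 : ℤ) ^ n ≡ ε [ZMOD M]) :
    (∑ l ∈ Finset.range n, (P l * 4 ^ (2 * l) + Q ((m + l) % n) * 4 ^ (2 * l + 1)))
      ≡ ∑ l ∈ Finset.range n, (P l + ε * Q l) * 4 ^ (2 * l) [ZMOD M] := by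
  have hexp : ∀ l < n, (4 : ℤ) ^ (2 * l + 1) ≡ ε * 4 ^ (2 * ((m + l) % n)) [ZMOD M] := by
    intro l hl
    by_cases h : m + l < n
    · rw [Nat.mod_eq_of_lt h, show 2 * (m + l) = (2 * l + 1) + n by omega]
      have h1 : ε * ((4:ℤ) ^ ((2 * l + 1) + n)) ≡ ε * (4 ^ (2 * l + 1) * ε) [ZMOD M] := by
        rw [pow_add]; exact (h4.mul_left _).mul_left _
      have h2 : ε * ((4:ℤ) ^ (2 * l + 1) * ε) = 4 ^ (2 * l + 1) := by
        rw [show ε * ((4:ℤ) ^ (2 * l + 1) * ε) = 4 ^ (2 * l + 1) * (ε * ε) by ring, hε, mul_one]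
      exact (h2 ▸ h1).symm
    · rw [Nat.mod_eq_sub_mod (le_of_not_gt h), Nat.mod_eq_of_lt (show m + l - n < n by omega),
        show 2 * l + 1 = 2 * (m + l - n) + n by omega, pow_add]
      calc (4:ℤ) ^ (2 * (m + l - n)) * 4 ^ n ≡ 4 ^ (2 * (m + l - n)) * ε [ZMOD M] :=
            h4.mul_left _
        _ = ε * 4 ^ (2 * (m + l - n)) := mul_comm _ _
  calc (∑ l ∈ Finset.range n, (P l * 4 ^ (2 * l) + Q ((m + l) % n) * 4 ^ (2 * l + 1)))
      ≡ ∑ l ∈ Finset.range n,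
          (P l * 4 ^ (2 * l) + ε * (Q ((m + l) % n) * 4 ^ (2 * ((m + l) % n)))) [ZMOD M] := by
        refine myModEq_sum M _ _ _ fun l hl => ?_
        have := ((hexp l (Finset.mem_range.1 hl)).mul_left (Q ((m + l) % n))).add_left
          (P l * 4 ^ (2 * l))
        calc P l * 4 ^ (2 * l) + Q ((m + l) % n) * 4 ^ (2 * l + 1)
            ≡ P l * 4 ^ (2 * l) + Q ((m + l) % n) * (ε * 4 ^ (2 * ((m + l) % n))) [ZMOD M] := this
          _ = P l * 4 ^ (2 * l) + ε * (Q ((m + l) % n) * 4 ^ (2 * ((m + l) % n))) := by ring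
    _ = ∑ l ∈ Finset.range n, (P l + ε * Q l) * 4 ^ (2 * l) := by
        rw [Finset.sum_add_distrib, myReindex n m hm (fun r => ε * (Q r * 4 ^ (2 * r))),
          ← Finset.sum_add_distrib]
        exact Finset.sum_congr rfl fun l _ => by ring

lemma mySumSplit (N : ℕ) (f : ℕ → ℤ) :
    ∑ i ∈ Finset.range (2 * N), f i = ∑ j ∈ Finset.range N, (f (2 * j) + f (2 * j + 1)) := by
  induction N with
  | zero => simp
  | succ k ih =>
    rw [show 2 * (k + 1) = 2 * k + 1 + 1 by ring, Finset.sum_range_succ, Finset.sum_range_succ,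
      Finset.sum_range_succ, ih]
    ring
theorem interleaved_W_mod (n : ℕ) (hn : Odd n) (hn3 : 3 ≤ n)
    (a b : ZMod n → ℕ) (ha : ∀ x, a x = 0 ∨ a x = 1) (hb : ∀ x, b x = 0 ∨ b x = 1)
    (c : ℕ → ℕ)
    (hc : ∀ i, c i = if i % 2 = 0 then a ((i / 2 : ℕ) : ZMod n)
      else a ((((n + 1) / 2 + (i - 1) / 2 : ℕ)) : ZMod n))
    (d : ℕ → ℕ)
    (hd : ∀ i, d i = if i % 2 = 0 then b ((i / 2 : ℕ) : ZMod n)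
      else 1 - b ((((n + 1) / 2 + (i - 1) / 2 : ℕ)) : ZMod n))
    (φ : ℕ → ℕ → ℕ)
    (hφ : φ 0 0 = 0 ∧ φ 0 1 = 1 ∧ φ 1 1 = 2 ∧ φ 1 0 = 3)
    (w : ℕ → ℕ) (hw : ∀ i, w i = φ (c i) (d i))
    (s t : ZMod n → ℤ) (hst : ∀ x, s x = (-1) ^ a x ∧ t x = (-1) ^ b x)
    (W : ℤ) (hW : W = ∑ i ∈ Finset.range (2 * n), (w i : ℤ) * 4 ^ i) :
    W ≡ -∑ l ∈ Finset.range n, s (l : ZMod n) * t (l : ZMod n) * 4 ^ (2 * l)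
        [ZMOD (4 ^ n + 1)] ∧
    W ≡ -2 * ∑ l ∈ Finset.range n, s (l : ZMod n) * 4 ^ (2 * l)
        [ZMOD (4 ^ n - 1)] := by
  have hn0 : 0 < n := by omega
  obtain ⟨nk, hnk⟩ := hn
  set m : ℕ := (n + 1) / 2 with hmdef
  have hm2 : 2 * m = n + 1 := by omega
  have hmn : m < n := by omega
  set P : ℕ → ℤ := fun r => (φ (a ((r : ℕ) : ZMod n)) (b ((r : ℕ) : ZMod n)) : ℤ) with hP
  set Q : ℕ → ℤ := fun r => (φ (a ((r : ℕ) : ZMod n)) (1 - b ((r : ℕ) : ZMod n)) : ℤ) with hQ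
  have hweven : ∀ l : ℕ, (w (2 * l) : ℤ) = P l := by
    intro l
    rw [hw, hc, hd, hP]
    simp [Nat.mul_mod_right, Nat.mul_div_cancel_left _ (two_pos)]
  have hwodd : ∀ l : ℕ, (w (2 * l + 1) : ℤ) = Q ((m + l) % n) := by
    intro l
    rw [hw, hc, hd, hQ]
    have h1 : (2 * l + 1) % 2 = 1 := by omega
    have h2 : (2 * l + 1 - 1) / 2 = l := by omega
    simp only [h1, h2, if_neg (by omega : ¬ (1 = 0))]
    rw [ZMod.natCast_mod]
  have hWsum : W = ∑ l ∈ Finset.range n,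
      (P l * 4 ^ (2 * l) + Q ((m + l) % n) * 4 ^ (2 * l + 1)) := by
    rw [hW, mySumSplit n (fun i => (w i : ℤ) * 4 ^ i)]
    exact Finset.sum_congr rfl fun l _ => by rw [hweven l, hwodd l]
  constructor
  · -- modulus 4^n + 1, ε = -1
    have h4 : (4 : ℤ) ^ n ≡ -1 [ZMOD (4 ^ n + 1)] := by
      rw [Int.modEq_iff_dvd]
      exact ⟨-1, by ring⟩
    have key := myKey n m hmn hm2 P Q (4 ^ n + 1) (-1) (by ring) h4
    rw [hWsum]
    refine key.trans ?_
    have heq : ∑ l ∈ Finset.range n, (P l + (-1) * Q l) * 4 ^ (2 * l)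
        = -∑ l ∈ Finset.range n, s (l : ZMod n) * t (l : ZMod n) * 4 ^ (2 * l) := by
      rw [← Finset.sum_neg_distrib]
      refine Finset.sum_congr rfl fun l _ => ?_
      obtain ⟨hs, ht⟩ := hst ((l : ℕ) : ZMod n)
      rw [hP, hQ, hs, ht]
      rcases ha ((l : ℕ) : ZMod n) with h | h <;> rcases hb ((l : ℕ) : ZMod n) with h' | h' <;>
        simp [h, h', hφ.1, hφ.2.1, hφ.2.2.1, hφ.2.2.2]
    rw [heq]
  · -- modulus 4^n - 1, ε = 1
    have h4 : (4 : ℤ) ^ n ≡ 1 [ZMOD (4 ^ n - 1)] := by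
      rw [Int.modEq_iff_dvd]
      exact ⟨-1, by ring⟩
    have key := myKey n m hmn hm2 P Q (4 ^ n - 1) 1 (by ring) h4
    rw [hWsum]
    refine key.trans ?_
    have heq : ∑ l ∈ Finset.range n, (P l + 1 * Q l) * 4 ^ (2 * l)
        = -2 * (∑ l ∈ Finset.range n, s (l : ZMod n) * 4 ^ (2 * l))
          + 3 * ∑ l ∈ Finset.range n, (4 : ℤ) ^ (2 * l) := by
      rw [Finset.mul_sum, Finset.mul_sum, ← Finset.sum_add_distrib]
      refine Finset.sum_congr rfl fun l _ => ?_
      obtain ⟨hs, ht⟩ := hst ((l : ℕ) : ZMod n)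
      rw [hP, hQ, hs]
      rcases ha ((l : ℕ) : ZMod n) with h | h <;> rcases hb ((l : ℕ) : ZMod n) with h' | h' <;>
        simp [h, h', hφ.1, hφ.2.1, hφ.2.2.1, hφ.2.2.2] <;> ring
    rw [heq]
    -- now kill the 3 * geometric sum term
    have h5 : (5 : ℤ) ∣ 4 ^ n + 1 := by
      have h45 : (4 : ℤ) ≡ -1 [ZMOD 5] := by decide
      have := (h45.pow n).add_right 1
      rw [Odd.neg_one_pow ⟨nk, by omega⟩] at this
      simpa using (Int.modEq_zero_iff_dvd.1 (this.trans (by decide)))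
    obtain ⟨k, hk⟩ := h5
    have hgeom : (15 : ℤ) * ∑ l ∈ Finset.range n, (4 : ℤ) ^ (2 * l) = 16 ^ n - 1 := by
      have hg := geom_sum_mul (16 : ℤ) n
      have : ∑ l ∈ Finset.range n, (4 : ℤ) ^ (2 * l) = ∑ l ∈ Finset.range n, (16 : ℤ) ^ l :=
        Finset.sum_congr rfl fun l _ => by rw [pow_mul]; norm_num
      rw [this, mul_comm]
      simpa using hg
    have hdvd : (4 ^ n - 1 : ℤ) ∣ 3 * ∑ l ∈ Finset.range n, (4 : ℤ) ^ (2 * l) := by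
      refine ⟨k, mul_left_cancel₀ (by norm_num : (5:ℤ) ≠ 0) ?_⟩
      have h16 : (16 : ℤ) ^ n - 1 = (4 ^ n - 1) * (4 ^ n + 1) := by
        rw [show (16 : ℤ) = 4 ^ 2 by norm_num, ← pow_mul, mul_comm 2 n, pow_mul]
        ring
      calc (5 : ℤ) * (3 * ∑ l ∈ Finset.range n, (4 : ℤ) ^ (2 * l))
          = 15 * ∑ l ∈ Finset.range n, (4 : ℤ) ^ (2 * l) := by ring
        _ = 16 ^ n - 1 := hgeom
        _ = (4 ^ n - 1) * (4 ^ n + 1) := h16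
        _ = 5 * ((4 ^ n - 1) * k) := by rw [hk]; ring
    have hz : 3 * ∑ l ∈ Finset.range n, (4 : ℤ) ^ (2 * l) ≡ 0 [ZMOD (4 ^ n - 1)] :=
      Int.modEq_zero_iff_dvd.2 hdvd
    calc -2 * (∑ l ∈ Finset.range n, s (l : ZMod n) * 4 ^ (2 * l))
          + 3 * ∑ l ∈ Finset.range n, (4 : ℤ) ^ (2 * l)
        ≡ -2 * (∑ l ∈ Finset.range n, s (l : ZMod n) * 4 ^ (2 * l)) + 0
          [ZMOD (4 ^ n - 1)] := hz.add_left _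
      _ = -2 * ∑ l ∈ Finset.range n, s (l : ZMod n) * 4 ^ (2 * l) := by ring
end

section
/- Let p ≡ 3 (mod 4) be prime with p ≢ 2 (mod 5), and let S = (4^(2p)-1)/15 - 2. Then gcd(S, 4^p + 1) = 1; if instead p ≡ 2 (mod 5), then gcd(S, 4^p + 1) = 5. -/
private lemma key16 : ∀ n : ℕ, ∃ c : ℤ, (16 : ℤ) ^ n - 1 = 15 * (15 * c + n) := by
  intro n
  induction n with
  | zero => exact ⟨0, by norm_num⟩
  | succ m ih =>
    obtain ⟨c, hc⟩ := ih
    refine ⟨16 * c + m, ?_⟩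
    have h : (16 : ℤ) ^ (m + 1) - 1 = 16 * ((16:ℤ)^m - 1) + 15 := by ring
    rw [h, hc]
    push_cast
    ring

theorem legendre_gcd (p : ℕ) (hp : p.Prime) (hp4 : p % 4 = 3) :
    (p % 5 ≠ 2 → Int.gcd (((4 : ℤ) ^ (2 * p) - 1) / 15 - 2) (4 ^ p + 1) = 1) ∧
    (p % 5 = 2 → Int.gcd (((4 : ℤ) ^ (2 * p) - 1) / 15 - 2) (4 ^ p + 1) = 5) := by
  have hodd : Odd p := Nat.odd_iff.mpr (by omega)
  -- 3 ∣ 4^p - 1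
  have h3 : (3 : ℤ) ∣ 4 ^ p - 1 := by
    have h := (Int.ModEq.pow p (show (4:ℤ) ≡ 1 [ZMOD 3] by decide)).dvd
    simpa using dvd_sub_comm.mp h
  -- 5 ∣ 4^p + 1
  have h5 : (5 : ℤ) ∣ 4 ^ p + 1 := by
    have h := (Int.ModEq.pow p (show (4:ℤ) ≡ -1 [ZMOD 5] by decide)).dvd
    rw [hodd.neg_one_pow] at h
    have : (-1 : ℤ) - 4 ^ p = -(4 ^ p + 1) := by ring
    rw [this] at h
    exact (dvd_neg).mp h
  obtain ⟨a, ha⟩ := h3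
  obtain ⟨b, hb⟩ := h5
  obtain ⟨c, hc⟩ := key16 p
  set k : ℤ := 15 * c + p with hk
  -- (4^(2p) - 1)/15 = k
  have hpow : (4 : ℤ) ^ (2 * p) = 16 ^ p := by
    rw [pow_mul]; norm_num
  have hdiv : ((4 : ℤ) ^ (2 * p) - 1) / 15 = k := by
    rw [hpow, hc, Int.mul_ediv_cancel_left _ (by norm_num)]
  rw [hdiv]
  -- k = a * b
  have hab : a * b = k := by
    have h1 : (15 : ℤ) * (a * b) = 15 * k := by
      have : (3 * a) * (5 * b) = (16:ℤ)^p - 1 := by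
        rw [← ha, ← hb]
        have : ((4:ℤ)^p - 1) * ((4:ℤ)^p + 1) = (4^p)^2 - 1 := by ring
        rw [this, ← pow_mul, mul_comm p 2]
        rw [hpow]
      rw [hc] at this
      linarith [this]
    exact mul_left_cancel₀ (by norm_num : (15:ℤ) ≠ 0) h1
  -- b is odd
  have hbodd : ∃ t : ℤ, b = 2 * t + 1 := by
    have hev : (2 : ℤ) ∣ 4 ^ p := by
      have hp1 : 1 ≤ p := hp.one_lt.le.trans' (by norm_num)
      exact dvd_pow (by norm_num) (by omega)
    obtain ⟨e, he⟩ := hev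
    refine ⟨b / 2 * 1 + (b - 2 * (b/2)) - 1 + e - e, ?_⟩
    omega
  obtain ⟨t, ht⟩ := hbodd
  have hco : IsCoprime (-2 : ℤ) b := ⟨t, 1, by rw [ht]; ring⟩
  have hco2 : IsCoprime (k - 2) b := by
    have h := hco.add_mul_left_left a
    have he : k - 2 = -2 + b * a := by rw [← hab]; ring
    rwa [he]
  set d : ℕ := Int.gcd (k - 2) (4 ^ p + 1) with hd
  have hdS : (d : ℤ) ∣ k - 2 := Int.gcd_dvd_left _ _
  have hdN : (d : ℤ) ∣ 4 ^ p + 1 := Int.gcd_dvd_right _ _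
  have hcd : IsCoprime (d : ℤ) b := IsCoprime.of_isCoprime_of_dvd_left hco2 hdS
  have hd5 : (d : ℤ) ∣ 5 := by
    refine hcd.dvd_of_dvd_mul_right ?_
    rwa [← hb]
  have hd5' : d ∣ 5 := by exact_mod_cast hd5
  -- 5 ∣ k - 2 ↔ p % 5 = 2
  have hiff : (5 : ℤ) ∣ k - 2 ↔ p % 5 = 2 := by
    rw [hk]; omega
  constructor
  · intro hne
    rcases (Nat.dvd_prime (by norm_num)).mp hd5' with h1 | h5'
    · exact h1
    · exfalso
      apply hne
      apply hiff.mp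
      rw [h5'] at hdS
      exact_mod_cast hdS
  · intro heq
    have h5S : (5 : ℤ) ∣ k - 2 := hiff.mpr heq
    have h5d : 5 ∣ d := by
      have h : (5 : ℤ) ∣ (d : ℤ) := Int.dvd_coe_gcd h5S ⟨b, hb⟩
      omega
    exact Nat.dvd_antisymm hd5' h5d
end

section
/- Let n be odd and S = (4^(2n)-1)/15. Then S ≡ (4^n+1)/5 (mod 4^n + 1), and gcd(S, 4^n + 1) = (4^n + 1)/5; consequently (4^(2n)-1)/gcd(S, 4^n+1) restricted appropriately gives log_4(5(4^n - 1)) as the 4-adic complexity of w(a,a). -/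
lemma pow16 (t : ℕ) : ∃ j, 16 ^ t = 15 * j + 1 := by
  induction t with
  | zero => exact ⟨0, rfl⟩
  | succ t ih =>
    obtain ⟨j, hj⟩ := ih
    exact ⟨16 * j + 1, by rw [pow_succ, hj]; ring⟩

lemma four_pow (n : ℕ) (hn : Odd n) : ∃ k, 4 ^ n = 15 * k + 4 := by
  obtain ⟨t, ht⟩ := hn
  obtain ⟨j, hj⟩ := pow16 t
  refine ⟨4 * j, ?_⟩
  subst ht
  have : (4:ℕ) ^ (2 * t + 1) = 4 * 16 ^ t := by
    rw [pow_succ, pow_mul]; norm_num; ring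
  rw [this, hj]; ring

theorem diagonal_case_complexity (n : ℕ) (hn : Odd n) :
    (4 ^ (2 * n) - 1) / 15 ≡ (4 ^ n + 1) / 5 [MOD 4 ^ n + 1] ∧
    Nat.gcd ((4 ^ (2 * n) - 1) / 15) (4 ^ n + 1) = (4 ^ n + 1) / 5 ∧
    (4 ^ (2 * n) - 1) / Nat.gcd ((4 ^ (2 * n) - 1) / 15) (4 ^ n + 1) =
      5 * (4 ^ n - 1) := by
  obtain ⟨k, hk⟩ := four_pow n hn
  have h2 : (4:ℕ) ^ (2 * n) = (4 ^ n) * (4 ^ n) := by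
    rw [two_mul, pow_add]
  have hS : (4 ^ (2 * n) - 1) / 15 = (5 * k + 1) * (3 * k + 1) := by
    rw [h2, hk]
    have : (15 * k + 4) * (15 * k + 4) - 1 = 15 * ((5 * k + 1) * (3 * k + 1)) := by
      ring_nf; omega
    rw [this, Nat.mul_div_cancel_left _ (by norm_num)]
  have hM : (4:ℕ) ^ n + 1 = 5 * (3 * k + 1) := by omega
  have hb : ((4:ℕ) ^ n + 1) / 5 = 3 * k + 1 := by
    rw [hM, Nat.mul_div_cancel_left _ (by norm_num)]
  have hgcd : Nat.gcd ((4 ^ (2 * n) - 1) / 15) (4 ^ n + 1) = 3 * k + 1 := by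
    rw [hS, hM, Nat.gcd_mul_right]
    have h5 : Nat.gcd (5 * k + 1) 5 = 1 := by
      have : (5 * k + 1) % 5 = 1 := by omega
      rw [Nat.gcd_comm, Nat.gcd_rec, this]
      simp
    rw [h5, one_mul]
  refine ⟨?_, by rw [hgcd, hb], ?_⟩
  · rw [hS, hb, hM]
    show ((5 * k + 1) * (3 * k + 1)) % (5 * (3 * k + 1)) = (3 * k + 1) % (5 * (3 * k + 1))
    have : (5 * k + 1) * (3 * k + 1) = 3 * k + 1 + (5 * (3 * k + 1)) * k := by ring
    rw [this, Nat.add_mul_mod_self_left]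
  · rw [hgcd, h2, hk]
    have : (15 * k + 4) * (15 * k + 4) - 1 = (15 * (5 * k + 1)) * (3 * k + 1) := by
      ring_nf; omega
    rw [this, Nat.mul_div_cancel _ (by omega)]
    omega
end
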